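/- If a finite simple graph G has chromatic number at most 3 (i.e., G admits a proper 3-coloring), then there exists a convex drawing σ of G with 2·cr(σ) ≥ M(G). -/

import Mathlib

/-- Two edges (as unordered pairs of vertices) share no endpoint, i.e. they are independent. -/
def Sym2Indep {V : Type*} (e f : Sym2 V) : Prop := ∀ x : V, x ∈ e → x ∉ f

/-- `M(G)`: the number of unordered pairs of edges of `G` that share no endpoint. -/
noncomputable def indepPairs {V : Type*} (G : SimpleGraph V) : ℕ :=
  {p : Sym2 (Sym2 V) | ∃ e f : Sym2 V,
    p = s(e, f) ∧ e ∈ G.edgeSet ∧ f ∈ G.edgeSet ∧ Sym2Indep e f}.ncard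

/-- `z` lies on the open cyclic arc from `x` to `y` in `ZMod n`. -/
def InArc {n : ℕ} (x y z : ZMod n) : Prop :=
  0 < (z - x).val ∧ (z - x).val < (y - x).val

/-- The independent edges `e` and `f` cross in the convex drawing `σ`:
their endpoints alternate in the cyclic order. -/
def ConvexCross {V : Type*} {n : ℕ} (σ : V → ZMod n) (e f : Sym2 V) : Prop :=
  Sym2Indep e f ∧ ∃ a b c d : V, e = s(a, b) ∧ f = s(c, d) ∧
    Xor' (InArc (σ a) (σ b) (σ c)) (InArc (σ a) (σ b) (σ d))

/-- `cr(σ)`: the number of unordered pairs of edges of `G` that cross in the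
convex drawing `σ`. -/
noncomputable def convexCr {V : Type*} {n : ℕ} (G : SimpleGraph V) (σ : V → ZMod n) : ℕ :=
  {p : Sym2 (Sym2 V) | ∃ e f : Sym2 V,
    p = s(e, f) ∧ e ∈ G.edgeSet ∧ f ∈ G.edgeSet ∧ ConvexCross σ e f}.ncard

section AuxConvex

/-- cyclic "open arc" predicate on natural positions -/
def Arc (x y z : ℕ) : Prop := (x < z ∧ (z < y ∨ y < x)) ∨ (z < y ∧ y < x)

lemma val_sub_cast {n x z : ℕ} (hn : 0 < n) (hx : x < n) (hz : z < n) :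
    ((z : ZMod n) - (x : ZMod n)).val = if x ≤ z then z - x else z + n - x := by
  haveI : NeZero n := ⟨hn.ne'⟩
  have e1 : ((z : ZMod n) - (x : ZMod n)) = ((z + (n - x) : ℕ) : ZMod n) := by
    push_cast [Nat.cast_sub hx.le]
    simp only [ZMod.natCast_self]
    ring
  rw [e1, ZMod.val_natCast]
  rcases le_or_gt x z with h | h
  · have h2 : z + (n - x) = (z - x) + n := by omega
    rw [h2, Nat.add_mod_right, Nat.mod_eq_of_lt (by omega)]
    simp [h]
  · have h2 : z + (n - x) = z + n - x := by omega
    rw [h2, Nat.mod_eq_of_lt (by omega)]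
    simp [not_le.mpr h]

lemma inArc_iff {n x y z : ℕ} (hn : 0 < n) (hx : x < n) (hy : y < n) (hz : z < n) :
    InArc (x : ZMod n) (y : ZMod n) (z : ZMod n) ↔ Arc x y z := by
  unfold InArc Arc
  rw [val_sub_cast hn hx hz, val_sub_cast hn hx hy]
  split_ifs <;> omega

lemma arc_congr {a b c a' b' c' : ℕ}
    (h1 : a < b ↔ a' < b') (h2 : a < c ↔ a' < c') (h3 : b < a ↔ b' < a')
    (h4 : b < c ↔ b' < c') (h5 : c < a ↔ c' < a') (h6 : c < b ↔ c' < b') :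
    Arc a b c ↔ Arc a' b' c' := by
  unfold Arc; omega

variable {V : Type*} [Fintype V]

/-- rank of a vertex in the order induced by an injective key -/
noncomputable def rnk (k : V → ℕ) (v : V) : ℕ :=
  (Finset.univ.filter fun w => k w < k v).card

open Finset in
lemma rnk_lt_rnk {k : V → ℕ} {v w : V} (h : k v < k w) : rnk k v < rnk k w := by
  apply Finset.card_lt_card
  constructor
  · intro u hu
    simp only [mem_filter, mem_univ, true_and] at hu ⊢
    omega
  · intro hsub
    have hv : v ∈ Finset.univ.filter fun u => k u < k w := by simp [h]
    have := hsub hv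
    simp only [mem_filter, mem_univ, true_and] at this
    omega

lemma rnk_lt_iff {k : V → ℕ} (hk : Function.Injective k) (v w : V) :
    rnk k v < rnk k w ↔ k v < k w := by
  constructor
  · intro h
    rcases Nat.lt_trichotomy (k v) (k w) with h1 | h1 | h1
    · exact h1
    · cases hk h1; omega
    · exact absurd (rnk_lt_rnk h1) (by omega)
  · exact rnk_lt_rnk

lemma rnk_inj {k : V → ℕ} (hk : Function.Injective k) :
    Function.Injective (rnk k) := by
  intro v w h
  rcases Nat.lt_trichotomy (k v) (k w) with h1 | h1 | h1
  · exact absurd (rnk_lt_rnk h1) (by omega)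
  · exact hk h1
  · exact absurd (rnk_lt_rnk h1) (by omega)

open Finset in
lemma rnk_lt_card {k : V → ℕ} [Nonempty V] (v : V) : rnk k v < Fintype.card V := by
  classical
  have hss : (Finset.univ.filter fun w => k w < k v) ⊆ Finset.univ.erase v := by
    intro u hu
    simp only [mem_filter, mem_univ, true_and] at hu
    simp only [mem_erase, mem_univ, and_true]
    rintro rfl; omega
  have h2 := Finset.card_le_card hss
  have h3 := Finset.card_erase_of_mem (Finset.mem_univ v)
  have h4 : 0 < Fintype.card V := Fintype.card_pos
  unfold rnk
  simp only [Finset.card_univ] at h3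
  omega

lemma add_mul_inj {n : ℕ} (c m : V → ℕ) (hm : ∀ v, m v < n)
    (h2 : ∀ v w, c v = c w → m v = m w → v = w) :
    Function.Injective (fun v => c v * n + m v) := by
  intro v w h
  simp only at h
  have hcc : c v = c w := by
    rcases Nat.lt_trichotomy (c v) (c w) with h1 | h1 | h1
    · have h3 : (c v + 1) * n ≤ c w * n := Nat.mul_le_mul_right n h1
      rw [add_mul, one_mul] at h3
      have := hm v; have := hm w; omega
    · exact h1
    · have h3 : (c w + 1) * n ≤ c v * n := Nat.mul_le_mul_right n h1
      rw [add_mul, one_mul] at h3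
      have := hm v; have := hm w; omega
  apply h2 v w hcc
  rw [hcc] at h; omega

/-- the four keys: order by color block, possibly reversing within color classes -/
noncomputable def keyFam (n : ℕ) (c x : V → ℕ) : Fin 4 → V → ℕ := fun i =>
  match i with
  | 0 => fun v => c v * n + (if c v = 0 then n - 1 - x v else x v)
  | 1 => fun v => c v * n + (if c v = 1 then n - 1 - x v else x v)
  | 2 => fun v => c v * n + (if c v = 2 then n - 1 - x v else x v)
  | 3 => fun v => c v * n + (n - 1 - x v)

lemma keyFam_inj {n : ℕ} (hn : 0 < n) (c x : V → ℕ) (hx : ∀ v, x v < n)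
    (hxinj : Function.Injective x) (i : Fin 4) :
    Function.Injective (keyFam n c x i) := by
  have gen : ∀ m : V → ℕ, (∀ v, m v < n) → (∀ v w, c v = c w → m v = m w → x v = x w) →
      Function.Injective (fun v => c v * n + m v) := by
    intro m hm h2
    exact add_mul_inj c m hm (fun v w hc hmm => hxinj (h2 v w hc hmm))
  fin_cases i
  · refine gen (fun v => if c v = 0 then n - 1 - x v else x v) (fun v => ?_) (fun v w hc hm => ?_)
    · show (if c v = 0 then n - 1 - x v else x v) < n
      have := hx v; split_ifs <;> omega
    · have hm' : (if c v = 0 then n - 1 - x v else x v)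
          = (if c w = 0 then n - 1 - x w else x w) := hm
      have := hx v; have := hx w
      rw [hc] at hm'; split_ifs at hm' <;> omega
  · refine gen (fun v => if c v = 1 then n - 1 - x v else x v) (fun v => ?_) (fun v w hc hm => ?_)
    · show (if c v = 1 then n - 1 - x v else x v) < n
      have := hx v; split_ifs <;> omega
    · have hm' : (if c v = 1 then n - 1 - x v else x v)
          = (if c w = 1 then n - 1 - x w else x w) := hm
      have := hx v; have := hx w
      rw [hc] at hm'; split_ifs at hm' <;> omega
  · refine gen (fun v => if c v = 2 then n - 1 - x v else x v) (fun v => ?_) (fun v w hc hm => ?_)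
    · show (if c v = 2 then n - 1 - x v else x v) < n
      have := hx v; split_ifs <;> omega
    · have hm' : (if c v = 2 then n - 1 - x v else x v)
          = (if c w = 2 then n - 1 - x w else x w) := hm
      have := hx v; have := hx w
      rw [hc] at hm'; split_ifs at hm' <;> omega
  · refine gen (fun v => n - 1 - x v) (fun v => ?_) (fun v w hc hm => ?_)
    · show n - 1 - x v < n
      have := hx v; omega
    · have hm' : n - 1 - x v = n - 1 - x w := hm
      have := hx v; have := hx w; omega

lemma conv_lemma [Nonempty V] (k : V → ℕ) (hk : Function.Injective k) (a b c d : V)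
    (hx : Xor' (Arc (k a) (k b) (k c)) (Arc (k a) (k b) (k d))) :
    Xor' (InArc ((rnk k a : ℕ) : ZMod (Fintype.card V))
               ((rnk k b : ℕ) : ZMod (Fintype.card V))
               ((rnk k c : ℕ) : ZMod (Fintype.card V)))
         (InArc ((rnk k a : ℕ) : ZMod (Fintype.card V))
               ((rnk k b : ℕ) : ZMod (Fintype.card V))
               ((rnk k d : ℕ) : ZMod (Fintype.card V))) := by
  have hn : 0 < Fintype.card V := Fintype.card_pos
  rw [inArc_iff hn (rnk_lt_card a) (rnk_lt_card b) (rnk_lt_card c),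
      inArc_iff hn (rnk_lt_card a) (rnk_lt_card b) (rnk_lt_card d)]
  have g1 : Arc (rnk k a) (rnk k b) (rnk k c) ↔ Arc (k a) (k b) (k c) :=
    arc_congr (rnk_lt_iff hk a b) (rnk_lt_iff hk a c) (rnk_lt_iff hk b a)
      (rnk_lt_iff hk b c) (rnk_lt_iff hk c a) (rnk_lt_iff hk c b)
  have g2 : Arc (rnk k a) (rnk k b) (rnk k d) ↔ Arc (k a) (k b) (k d) :=
    arc_congr (rnk_lt_iff hk a b) (rnk_lt_iff hk a d) (rnk_lt_iff hk b a)
      (rnk_lt_iff hk b d) (rnk_lt_iff hk d a) (rnk_lt_iff hk d b)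
  rw [g1, g2]; exact hx

end AuxConvex

set_option maxHeartbeats 2000000 in
lemma coreArith {n : ℕ} (ca cb cc cd xa xb xc xd : ℕ)
    (hca : ca < 3) (hcb : cb < 3) (hcc : cc < 3) (hcd : cd < 3)
    (hab : ca ≠ cb) (hcd' : cc ≠ cd)
    (hxa : xa < n) (hxb : xb < n) (hxc : xc < n) (hxd : xd < n)
    (hxab : xa ≠ xb) (hxac : xa ≠ xc) (hxad : xa ≠ xd)
    (hxbc : xb ≠ xc) (hxbd : xb ≠ xd) (hxcd : xc ≠ xd) :
    ((Xor' (Arc (ca * n + (if ca = 0 then n - 1 - xa else xa)) (cb * n + (if cb = 0 then n - 1 - xb else xb)) (cc * n + (if cc = 0 then n - 1 - xc else xc))) (Arc (ca * n + (if ca = 0 then n - 1 - xa else xa)) (cb * n + (if cb = 0 then n - 1 - xb else xb)) (cd * n + (if cd = 0 then n - 1 - xd else xd)))) ∧ (Xor' (Arc (ca * n + (if ca = 1 then n - 1 - xa else xa)) (cb * n + (if cb = 1 then n - 1 - xb else xb)) (cc * n + (if cc = 1 then n - 1 - xc else xc))) (Arc (ca * n + (if ca = 1 then n - 1 - xa else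 xa)) (cb * n + (if cb = 1 then n - 1 - xb else xb)) (cd * n + (if cd = 1 then n - 1 - xd else xd))))) ∨
      ((Xor' (Arc (ca * n + (if ca = 0 then n - 1 - xa else xa)) (cb * n + (if cb = 0 then n - 1 - xb else xb)) (cc * n + (if cc = 0 then n - 1 - xc else xc))) (Arc (ca * n + (if ca = 0 then n - 1 - xa else xa)) (cb * n + (if cb = 0 then n - 1 - xb else xb)) (cd * n + (if cd = 0 then n - 1 - xd else xd)))) ∧ (Xor' (Arc (ca * n + (if ca = 2 then n - 1 - xa else xa)) (cb * n + (if cb = 2 then n - 1 - xb else xb)) (cc * n + (if cc = 2 then n - 1 - xc else xc))) (Arc (ca * n + (if ca = 2 then n - 1 - xa else xa)) (cb * n + (if cb = 2 then n - 1 - xb else xb)) (cd * n + (if cd = 2 then n - 1 - xd else xd))))) ∨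
      ((Xor' (Arc (ca * n + (if ca = 0 then n - 1 - xa else xa)) (cb * n + (if cb = 0 then n - 1 - xb else xb)) (cc * n + (if cc = 0 then n - 1 - xc else xc))) (Arc (ca * n + (if ca = 0 then n - 1 - xa else xa)) (cb * n + (if cb = 0 then n - 1 - xb else xb)) (cd * n + (if cd = 0 then n - 1 - xd else xd)))) ∧ (Xor' (Arc (ca * n + (n - 1 - xa)) (cb * n + (n - 1 - xb)) (cc * n + (n - 1 - xc))) (Arc (ca * n + (n - 1 - xa)) (cb * n + (n - 1 - xb)) (cd * n + (n - 1 - xd))))) ∨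
      ((Xor' (Arc (ca * n + (if ca = 1 then n - 1 - xa else xa)) (cb * n + (if cb = 1 then n - 1 - xb else xb)) (cc * n + (if cc = 1 then n - 1 - xc else xc))) (Arc (ca * n + (if ca = 1 then n - 1 - xa else xa)) (cb * n + (if cb = 1 then n - 1 - xb else xb)) (cd * n + (if cd = 1 then n - 1 - xd else xd)))) ∧ (Xor' (Arc (ca * n + (if ca = 2 then n - 1 - xa else xa)) (cb * n + (if cb = 2 then n - 1 - xb else xb)) (cc * n + (if cc = 2 then n - 1 - xc else xc))) (Arc (ca * n + (if ca = 2 then n - 1 - xa else xa)) (cb * n + (if cb = 2 then n - 1 - xb else xb)) (cd * n + (if cd = 2 then n - 1 - xd else xd))))) ∨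
      ((Xor' (Arc (ca * n + (if ca = 1 then n - 1 - xa else xa)) (cb * n + (if cb = 1 then n - 1 - xb else xb)) (cc * n + (if cc = 1 then n - 1 - xc else xc))) (Arc (ca * n + (if ca = 1 then n - 1 - xa else xa)) (cb * n + (if cb = 1 then n - 1 - xb else xb)) (cd * n + (if cd = 1 then n - 1 - xd else xd)))) ∧ (Xor' (Arc (ca * n + (n - 1 - xa)) (cb * n + (n - 1 - xb)) (cc * n + (n - 1 - xc))) (Arc (ca * n + (n - 1 - xa)) (cb * n + (n - 1 - xb)) (cd * n + (n - 1 - xd))))) ∨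
      ((Xor' (Arc (ca * n + (if ca = 2 then n - 1 - xa else xa)) (cb * n + (if cb = 2 then n - 1 - xb else xb)) (cc * n + (if cc = 2 then n - 1 - xc else xc))) (Arc (ca * n + (if ca = 2 then n - 1 - xa else xa)) (cb * n + (if cb = 2 then n - 1 - xb else xb)) (cd * n + (if cd = 2 then n - 1 - xd else xd)))) ∧ (Xor' (Arc (ca * n + (n - 1 - xa)) (cb * n + (n - 1 - xb)) (cc * n + (n - 1 - xc))) (Arc (ca * n + (n - 1 - xa)) (cb * n + (n - 1 - xb)) (cd * n + (n - 1 - xd))))) := by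
  simp only [Arc, Xor', Xor]
  interval_cases ca
  · interval_cases cb
    · interval_cases cc
      · interval_cases cd
        ·
          exact absurd rfl hab
        ·
          exact absurd rfl hab
        ·
          exact absurd rfl hab
      · interval_cases cd
        ·
          exact absurd rfl hab
        ·
          exact absurd rfl hab
        ·
          exact absurd rfl hab
      · interval_cases cd
        ·
          exact absurd rfl hab
        ·
          exact absurd rfl hab
        ·
          exact absurd rfl hab
    · interval_cases cc
      · interval_cases cd
        ·
          exact absurd rfl hcd'
        ·
          simp only [Nat.reduceEqDiff, reduceIte]
          rcases Ne.lt_or_gt hxac with hB0 | hB0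
          ·
            rcases Ne.lt_or_gt hxbd with hB1 | hB1
            ·
              exact Or.inr (Or.inr (Or.inr (Or.inr (Or.inr (⟨by omega, by omega⟩)))))
            ·
              exact Or.inl ⟨by omega, by omega⟩
          ·
            rcases Ne.lt_or_gt hxbd with hB1 | hB1
            ·
              exact Or.inl ⟨by omega, by omega⟩
            ·
              exact Or.inr (Or.inr (Or.inr (Or.inr (Or.inr (⟨by omega, by omega⟩)))))
        ·
          simp only [Nat.reduceEqDiff, reduceIte]
          rcases Ne.lt_or_gt hxac with hB0 | hB0
          ·
            exact Or.inr (Or.inr (Or.inr (Or.inl ⟨by omega, by omega⟩)))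
          ·
            exact Or.inr (Or.inr (Or.inl ⟨by omega, by omega⟩))
      · interval_cases cd
        ·
          simp only [Nat.reduceEqDiff, reduceIte]
          rcases Ne.lt_or_gt hxad with hB0 | hB0
          ·
            rcases Ne.lt_or_gt hxbc with hB1 | hB1
            ·
              exact Or.inr (Or.inr (Or.inr (Or.inr (Or.inr (⟨by omega, by omega⟩)))))
            ·
              exact Or.inl ⟨by omega, by omega⟩
          ·
            rcases Ne.lt_or_gt hxbc with hB1 | hB1
            ·
              exact Or.inl ⟨by omega, by omega⟩
            ·
              exact Or.inr (Or.inr (Or.inr (Or.inr (Or.inr (⟨by omega, by omega⟩)))))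
        ·
          exact absurd rfl hcd'
        ·
          simp only [Nat.reduceEqDiff, reduceIte]
          rcases Ne.lt_or_gt hxbc with hB0 | hB0
          ·
            exact Or.inr (Or.inr (Or.inr (Or.inr (Or.inl ⟨by omega, by omega⟩))))
          ·
            exact Or.inr (Or.inl ⟨by omega, by omega⟩)
      · interval_cases cd
        ·
          simp only [Nat.reduceEqDiff, reduceIte]
          rcases Ne.lt_or_gt hxad with hB0 | hB0
          ·
            exact Or.inr (Or.inr (Or.inr (Or.inl ⟨by omega, by omega⟩)))
          ·
            exact Or.inr (Or.inr (Or.inl ⟨by omega, by omega⟩))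
        ·
          simp only [Nat.reduceEqDiff, reduceIte]
          rcases Ne.lt_or_gt hxbd with hB0 | hB0
          ·
            exact Or.inr (Or.inr (Or.inr (Or.inr (Or.inl ⟨by omega, by omega⟩))))
          ·
            exact Or.inr (Or.inl ⟨by omega, by omega⟩)
        ·
          exact absurd rfl hcd'
    · interval_cases cc
      · interval_cases cd
        ·
          exact absurd rfl hcd'
        ·
          simp only [Nat.reduceEqDiff, reduceIte]
          rcases Ne.lt_or_gt hxac with hB0 | hB0
          ·
            exact Or.inr (Or.inr (Or.inl ⟨by omega, by omega⟩))
          ·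
            exact Or.inr (Or.inr (Or.inr (Or.inl ⟨by omega, by omega⟩)))
        ·
          simp only [Nat.reduceEqDiff, reduceIte]
          rcases Ne.lt_or_gt hxac with hB0 | hB0
          ·
            rcases Ne.lt_or_gt hxbd with hB1 | hB1
            ·
              exact Or.inr (Or.inr (Or.inr (Or.inr (Or.inl ⟨by omega, by omega⟩))))
            ·
              exact Or.inr (Or.inl ⟨by omega, by omega⟩)
          ·
            rcases Ne.lt_or_gt hxbd with hB1 | hB1
            ·
              exact Or.inr (Or.inl ⟨by omega, by omega⟩)
            ·
              exact Or.inr (Or.inr (Or.inr (Or.inr (Or.inl ⟨by omega, by omega⟩))))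
      · interval_cases cd
        ·
          simp only [Nat.reduceEqDiff, reduceIte]
          rcases Ne.lt_or_gt hxad with hB0 | hB0
          ·
            exact Or.inr (Or.inr (Or.inl ⟨by omega, by omega⟩))
          ·
            exact Or.inr (Or.inr (Or.inr (Or.inl ⟨by omega, by omega⟩)))
        ·
          exact absurd rfl hcd'
        ·
          simp only [Nat.reduceEqDiff, reduceIte]
          rcases Ne.lt_or_gt hxbd with hB0 | hB0
          ·
            exact Or.inl ⟨by omega, by omega⟩
          ·
            exact Or.inr (Or.inr (Or.inr (Or.inr (Or.inr (⟨by omega, by omega⟩)))))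
      · interval_cases cd
        ·
          simp only [Nat.reduceEqDiff, reduceIte]
          rcases Ne.lt_or_gt hxad with hB0 | hB0
          ·
            rcases Ne.lt_or_gt hxbc with hB1 | hB1
            ·
              exact Or.inr (Or.inr (Or.inr (Or.inr (Or.inl ⟨by omega, by omega⟩))))
            ·
              exact Or.inr (Or.inl ⟨by omega, by omega⟩)
          ·
            rcases Ne.lt_or_gt hxbc with hB1 | hB1
            ·
              exact Or.inr (Or.inl ⟨by omega, by omega⟩)
            ·
              exact Or.inr (Or.inr (Or.inr (Or.inr (Or.inl ⟨by omega, by omega⟩))))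
        ·
          simp only [Nat.reduceEqDiff, reduceIte]
          rcases Ne.lt_or_gt hxbc with hB0 | hB0
          ·
            exact Or.inl ⟨by omega, by omega⟩
          ·
            exact Or.inr (Or.inr (Or.inr (Or.inr (Or.inr (⟨by omega, by omega⟩)))))
        ·
          exact absurd rfl hcd'
  · interval_cases cb
    · interval_cases cc
      · interval_cases cd
        ·
          exact absurd rfl hcd'
        ·
          simp only [Nat.reduceEqDiff, reduceIte]
          rcases Ne.lt_or_gt hxad with hB0 | hB0
          ·
            rcases Ne.lt_or_gt hxbc with hB1 | hB1
            ·
              exact Or.inr (Or.inr (Or.inr (Or.inr (Or.inr (⟨by omega, by omega⟩)))))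
            ·
              exact Or.inl ⟨by omega, by omega⟩
          ·
            rcases Ne.lt_or_gt hxbc with hB1 | hB1
            ·
              exact Or.inl ⟨by omega, by omega⟩
            ·
              exact Or.inr (Or.inr (Or.inr (Or.inr (Or.inr (⟨by omega, by omega⟩)))))
        ·
          simp only [Nat.reduceEqDiff, reduceIte]
          rcases Ne.lt_or_gt hxbc with hB0 | hB0
          ·
            exact Or.inr (Or.inr (Or.inr (Or.inl ⟨by omega, by omega⟩)))
          ·
            exact Or.inr (Or.inr (Or.inl ⟨by omega, by omega⟩))
      · interval_cases cd
        ·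
          simp only [Nat.reduceEqDiff, reduceIte]
          rcases Ne.lt_or_gt hxac with hB0 | hB0
          ·
            rcases Ne.lt_or_gt hxbd with hB1 | hB1
            ·
              exact Or.inr (Or.inr (Or.inr (Or.inr (Or.inr (⟨by omega, by omega⟩)))))
            ·
              exact Or.inl ⟨by omega, by omega⟩
          ·
            rcases Ne.lt_or_gt hxbd with hB1 | hB1
            ·
              exact Or.inl ⟨by omega, by omega⟩
            ·
              exact Or.inr (Or.inr (Or.inr (Or.inr (Or.inr (⟨by omega, by omega⟩)))))
        ·
          exact absurd rfl hcd'
        ·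
          simp only [Nat.reduceEqDiff, reduceIte]
          rcases Ne.lt_or_gt hxac with hB0 | hB0
          ·
            exact Or.inr (Or.inr (Or.inr (Or.inr (Or.inl ⟨by omega, by omega⟩))))
          ·
            exact Or.inr (Or.inl ⟨by omega, by omega⟩)
      · interval_cases cd
        ·
          simp only [Nat.reduceEqDiff, reduceIte]
          rcases Ne.lt_or_gt hxbd with hB0 | hB0
          ·
            exact Or.inr (Or.inr (Or.inr (Or.inl ⟨by omega, by omega⟩)))
          ·
            exact Or.inr (Or.inr (Or.inl ⟨by omega, by omega⟩))
        ·
          simp only [Nat.reduceEqDiff, reduceIte]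
          rcases Ne.lt_or_gt hxad with hB0 | hB0
          ·
            exact Or.inr (Or.inr (Or.inr (Or.inr (Or.inl ⟨by omega, by omega⟩))))
          ·
            exact Or.inr (Or.inl ⟨by omega, by omega⟩)
        ·
          exact absurd rfl hcd'
    · interval_cases cc
      · interval_cases cd
        ·
          exact absurd rfl hab
        ·
          exact absurd rfl hab
        ·
          exact absurd rfl hab
      · interval_cases cd
        ·
          exact absurd rfl hab
        ·
          exact absurd rfl hab
        ·
          exact absurd rfl hab
      · interval_cases cd
        ·
          exact absurd rfl hab
        ·
          exact absurd rfl hab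
        ·
          exact absurd rfl hab
    · interval_cases cc
      · interval_cases cd
        ·
          exact absurd rfl hcd'
        ·
          simp only [Nat.reduceEqDiff, reduceIte]
          rcases Ne.lt_or_gt hxad with hB0 | hB0
          ·
            exact Or.inr (Or.inl ⟨by omega, by omega⟩)
          ·
            exact Or.inr (Or.inr (Or.inr (Or.inr (Or.inl ⟨by omega, by omega⟩))))
        ·
          simp only [Nat.reduceEqDiff, reduceIte]
          rcases Ne.lt_or_gt hxbd with hB0 | hB0
          ·
            exact Or.inr (Or.inr (Or.inr (Or.inr (Or.inr (⟨by omega, by omega⟩)))))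
          ·
            exact Or.inl ⟨by omega, by omega⟩
      · interval_cases cd
        ·
          simp only [Nat.reduceEqDiff, reduceIte]
          rcases Ne.lt_or_gt hxac with hB0 | hB0
          ·
            exact Or.inr (Or.inl ⟨by omega, by omega⟩)
          ·
            exact Or.inr (Or.inr (Or.inr (Or.inr (Or.inl ⟨by omega, by omega⟩))))
        ·
          exact absurd rfl hcd'
        ·
          simp only [Nat.reduceEqDiff, reduceIte]
          rcases Ne.lt_or_gt hxac with hB0 | hB0
          ·
            rcases Ne.lt_or_gt hxbd with hB1 | hB1
            ·
              exact Or.inr (Or.inr (Or.inl ⟨by omega, by omega⟩))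
            ·
              exact Or.inr (Or.inr (Or.inr (Or.inl ⟨by omega, by omega⟩)))
          ·
            rcases Ne.lt_or_gt hxbd with hB1 | hB1
            ·
              exact Or.inr (Or.inr (Or.inr (Or.inl ⟨by omega, by omega⟩)))
            ·
              exact Or.inr (Or.inr (Or.inl ⟨by omega, by omega⟩))
      · interval_cases cd
        ·
          simp only [Nat.reduceEqDiff, reduceIte]
          rcases Ne.lt_or_gt hxbc with hB0 | hB0
          ·
            exact Or.inr (Or.inr (Or.inr (Or.inr (Or.inr (⟨by omega, by omega⟩)))))
          ·
            exact Or.inl ⟨by omega, by omega⟩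
        ·
          simp only [Nat.reduceEqDiff, reduceIte]
          rcases Ne.lt_or_gt hxad with hB0 | hB0
          ·
            rcases Ne.lt_or_gt hxbc with hB1 | hB1
            ·
              exact Or.inr (Or.inr (Or.inl ⟨by omega, by omega⟩))
            ·
              exact Or.inr (Or.inr (Or.inr (Or.inl ⟨by omega, by omega⟩)))
          ·
            rcases Ne.lt_or_gt hxbc with hB1 | hB1
            ·
              exact Or.inr (Or.inr (Or.inr (Or.inl ⟨by omega, by omega⟩)))
            ·
              exact Or.inr (Or.inr (Or.inl ⟨by omega, by omega⟩))
        ·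
          exact absurd rfl hcd'
  · interval_cases cb
    · interval_cases cc
      · interval_cases cd
        ·
          exact absurd rfl hcd'
        ·
          simp only [Nat.reduceEqDiff, reduceIte]
          rcases Ne.lt_or_gt hxbc with hB0 | hB0
          ·
            exact Or.inr (Or.inr (Or.inl ⟨by omega, by omega⟩))
          ·
            exact Or.inr (Or.inr (Or.inr (Or.inl ⟨by omega, by omega⟩)))
        ·
          simp only [Nat.reduceEqDiff, reduceIte]
          rcases Ne.lt_or_gt hxad with hB0 | hB0
          ·
            rcases Ne.lt_or_gt hxbc with hB1 | hB1
            ·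
              exact Or.inr (Or.inr (Or.inr (Or.inr (Or.inl ⟨by omega, by omega⟩))))
            ·
              exact Or.inr (Or.inl ⟨by omega, by omega⟩)
          ·
            rcases Ne.lt_or_gt hxbc with hB1 | hB1
            ·
              exact Or.inr (Or.inl ⟨by omega, by omega⟩)
            ·
              exact Or.inr (Or.inr (Or.inr (Or.inr (Or.inl ⟨by omega, by omega⟩))))
      · interval_cases cd
        ·
          simp only [Nat.reduceEqDiff, reduceIte]
          rcases Ne.lt_or_gt hxbd with hB0 | hB0
          ·
            exact Or.inr (Or.inr (Or.inl ⟨by omega, by omega⟩))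
          ·
            exact Or.inr (Or.inr (Or.inr (Or.inl ⟨by omega, by omega⟩)))
        ·
          exact absurd rfl hcd'
        ·
          simp only [Nat.reduceEqDiff, reduceIte]
          rcases Ne.lt_or_gt hxad with hB0 | hB0
          ·
            exact Or.inl ⟨by omega, by omega⟩
          ·
            exact Or.inr (Or.inr (Or.inr (Or.inr (Or.inr (⟨by omega, by omega⟩)))))
      · interval_cases cd
        ·
          simp only [Nat.reduceEqDiff, reduceIte]
          rcases Ne.lt_or_gt hxac with hB0 | hB0
          ·
            rcases Ne.lt_or_gt hxbd with hB1 | hB1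
            ·
              exact Or.inr (Or.inr (Or.inr (Or.inr (Or.inl ⟨by omega, by omega⟩))))
            ·
              exact Or.inr (Or.inl ⟨by omega, by omega⟩)
          ·
            rcases Ne.lt_or_gt hxbd with hB1 | hB1
            ·
              exact Or.inr (Or.inl ⟨by omega, by omega⟩)
            ·
              exact Or.inr (Or.inr (Or.inr (Or.inr (Or.inl ⟨by omega, by omega⟩))))
        ·
          simp only [Nat.reduceEqDiff, reduceIte]
          rcases Ne.lt_or_gt hxac with hB0 | hB0
          ·
            exact Or.inl ⟨by omega, by omega⟩
          ·
            exact Or.inr (Or.inr (Or.inr (Or.inr (Or.inr (⟨by omega, by omega⟩)))))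
        ·
          exact absurd rfl hcd'
    · interval_cases cc
      · interval_cases cd
        ·
          exact absurd rfl hcd'
        ·
          simp only [Nat.reduceEqDiff, reduceIte]
          rcases Ne.lt_or_gt hxbd with hB0 | hB0
          ·
            exact Or.inr (Or.inl ⟨by omega, by omega⟩)
          ·
            exact Or.inr (Or.inr (Or.inr (Or.inr (Or.inl ⟨by omega, by omega⟩))))
        ·
          simp only [Nat.reduceEqDiff, reduceIte]
          rcases Ne.lt_or_gt hxad with hB0 | hB0
          ·
            exact Or.inr (Or.inr (Or.inr (Or.inr (Or.inr (⟨by omega, by omega⟩)))))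
          ·
            exact Or.inl ⟨by omega, by omega⟩
      · interval_cases cd
        ·
          simp only [Nat.reduceEqDiff, reduceIte]
          rcases Ne.lt_or_gt hxbc with hB0 | hB0
          ·
            exact Or.inr (Or.inl ⟨by omega, by omega⟩)
          ·
            exact Or.inr (Or.inr (Or.inr (Or.inr (Or.inl ⟨by omega, by omega⟩))))
        ·
          exact absurd rfl hcd'
        ·
          simp only [Nat.reduceEqDiff, reduceIte]
          rcases Ne.lt_or_gt hxad with hB0 | hB0
          ·
            rcases Ne.lt_or_gt hxbc with hB1 | hB1
            ·
              exact Or.inr (Or.inr (Or.inl ⟨by omega, by omega⟩))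
            ·
              exact Or.inr (Or.inr (Or.inr (Or.inl ⟨by omega, by omega⟩)))
          ·
            rcases Ne.lt_or_gt hxbc with hB1 | hB1
            ·
              exact Or.inr (Or.inr (Or.inr (Or.inl ⟨by omega, by omega⟩)))
            ·
              exact Or.inr (Or.inr (Or.inl ⟨by omega, by omega⟩))
      · interval_cases cd
        ·
          simp only [Nat.reduceEqDiff, reduceIte]
          rcases Ne.lt_or_gt hxac with hB0 | hB0
          ·
            exact Or.inr (Or.inr (Or.inr (Or.inr (Or.inr (⟨by omega, by omega⟩)))))
          ·
            exact Or.inl ⟨by omega, by omega⟩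
        ·
          simp only [Nat.reduceEqDiff, reduceIte]
          rcases Ne.lt_or_gt hxac with hB0 | hB0
          ·
            rcases Ne.lt_or_gt hxbd with hB1 | hB1
            ·
              exact Or.inr (Or.inr (Or.inl ⟨by omega, by omega⟩))
            ·
              exact Or.inr (Or.inr (Or.inr (Or.inl ⟨by omega, by omega⟩)))
          ·
            rcases Ne.lt_or_gt hxbd with hB1 | hB1
            ·
              exact Or.inr (Or.inr (Or.inr (Or.inl ⟨by omega, by omega⟩)))
            ·
              exact Or.inr (Or.inr (Or.inl ⟨by omega, by omega⟩))
        ·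
          exact absurd rfl hcd'
    · interval_cases cc
      · interval_cases cd
        ·
          exact absurd rfl hab
        ·
          exact absurd rfl hab
        ·
          exact absurd rfl hab
      · interval_cases cd
        ·
          exact absurd rfl hab
        ·
          exact absurd rfl hab
        ·
          exact absurd rfl hab
      · interval_cases cd
        ·
          exact absurd rfl hab
        ·
          exact absurd rfl hab
        ·
          exact absurd rfl hab


/-- If a finite simple graph `G` admits a proper 3-coloring, then there is a convex
drawing `σ` of `G` with `2 · cr(σ) ≥ M(G)`. -/
theorem convex_drawing_half_of_indep_pairs_of_colorable {V : Type*} [Fintype V]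
    (G : SimpleGraph V) (hG : G.Colorable 3) :
    ∃ σ : V → ZMod (Fintype.card V), Function.Injective σ ∧
      indepPairs G ≤ 2 * convexCr G σ := by
  classical
  obtain hV | hV := isEmpty_or_nonempty V
  · refine ⟨fun _ => 0, Function.injective_of_subsingleton _, ?_⟩
    have hempty : {p : Sym2 (Sym2 V) | ∃ e f : Sym2 V,
        p = s(e, f) ∧ e ∈ G.edgeSet ∧ f ∈ G.edgeSet ∧ Sym2Indep e f} = ∅ := by
      ext p
      simp only [Set.mem_setOf_eq, Set.mem_empty_iff_false, iff_false]
      rintro ⟨e, f, _, he, _⟩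
      induction e using Sym2.ind with
      | _ x y => exact hV.elim x
    unfold indepPairs
    rw [hempty, Set.ncard_empty]
    exact Nat.zero_le _
  · obtain ⟨C⟩ := hG
    have hn : 0 < Fintype.card V := Fintype.card_pos
    set nn := Fintype.card V with hnn
    let ι := Fintype.equivFin V
    let cf : V → ℕ := fun v => (C v).val
    let xf : V → ℕ := fun v => ((ι v : Fin (Fintype.card V)) : ℕ)
    have hcf : ∀ v, cf v < 3 := fun v => (C v).isLt
    have hxf : ∀ v, xf v < nn := fun v => (ι v).isLt
    have hxinj : Function.Injective xf :=
      fun v w h => ι.injective (Fin.val_injective h)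
    have hkinj : ∀ i, Function.Injective (keyFam nn cf xf i) :=
      keyFam_inj hn cf xf hxf hxinj
    let σf : Fin 4 → V → ZMod nn :=
      fun i v => ((rnk (keyFam nn cf xf i) v : ℕ) : ZMod nn)
    have hσinj : ∀ i, Function.Injective (σf i) := by
      intro i v w h
      have hv := rnk_lt_card (k := keyFam nn cf xf i) v
      have hw := rnk_lt_card (k := keyFam nn cf xf i) w
      have h' : ((rnk (keyFam nn cf xf i) v : ℕ) : ZMod nn)
          = ((rnk (keyFam nn cf xf i) w : ℕ) : ZMod nn) := h
      have h2 := congrArg ZMod.val h'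
      rw [ZMod.val_cast_of_lt hv, ZMod.val_cast_of_lt hw] at h2
      exact rnk_inj (hkinj i) h2
    let I : Set (Sym2 (Sym2 V)) := {p | ∃ e f : Sym2 V,
      p = s(e, f) ∧ e ∈ G.edgeSet ∧ f ∈ G.edgeSet ∧ Sym2Indep e f}
    let Cs : Fin 4 → Set (Sym2 (Sym2 V)) := fun i => {p | ∃ e f : Sym2 V,
      p = s(e, f) ∧ e ∈ G.edgeSet ∧ f ∈ G.edgeSet ∧ ConvexCross (σf i) e f}
    have core : ∀ p ∈ I, ∃ i j : Fin 4, i ≠ j ∧ p ∈ Cs i ∧ p ∈ Cs j := by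
      rintro p ⟨e, f, rfl, he, hf, hind⟩
      obtain ⟨a, b, rfl⟩ : ∃ a b, e = s(a, b) := by
        induction e using Sym2.ind with
        | _ x y => exact ⟨x, y, rfl⟩
      obtain ⟨c, d, rfl⟩ : ∃ c d, f = s(c, d) := by
        induction f using Sym2.ind with
        | _ x y => exact ⟨x, y, rfl⟩
      have hadj1 : G.Adj a b := he
      have hadj2 : G.Adj c d := hf
      have hab : a ≠ b := hadj1.ne
      have hcd : c ≠ d := hadj2.ne
      have h1 := hind a (Sym2.mem_mk_left a b)
      have h2 := hind b (Sym2.mem_mk_right a b)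
      rw [Sym2.mem_iff] at h1 h2
      push_neg at h1 h2
      obtain ⟨hac, had⟩ := h1
      obtain ⟨hbc, hbd⟩ := h2
      have hcab : cf a ≠ cf b := fun h => C.valid hadj1 (Fin.val_injective h)
      have hccd : cf c ≠ cf d := fun h => C.valid hadj2 (Fin.val_injective h)
      have hxne : ∀ {v w : V}, v ≠ w → xf v ≠ xf w :=
        fun hvw h => hvw (hxinj h)
      have HX := coreArith (n := nn) (cf a) (cf b) (cf c) (cf d)
        (xf a) (xf b) (xf c) (xf d)
        (hcf a) (hcf b) (hcf c) (hcf d) hcab hccd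
        (hxf a) (hxf b) (hxf c) (hxf d)
        (hxne hab) (hxne hac) (hxne had) (hxne hbc) (hxne hbd) (hxne hcd)
      have mem : ∀ (i : Fin 4),
          (Xor' (Arc (keyFam nn cf xf i a) (keyFam nn cf xf i b) (keyFam nn cf xf i c))
                (Arc (keyFam nn cf xf i a) (keyFam nn cf xf i b) (keyFam nn cf xf i d))) →
          s(s(a, b), s(c, d)) ∈ Cs i := by
        intro i hx
        exact ⟨s(a, b), s(c, d), rfl, he, hf, hind, a, b, c, d, rfl, rfl,
          conv_lemma (keyFam nn cf xf i) (hkinj i) a b c d hx⟩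
      rcases HX with ⟨u1, u2⟩ | ⟨u1, u2⟩ | ⟨u1, u2⟩ | ⟨u1, u2⟩ | ⟨u1, u2⟩ | ⟨u1, u2⟩
      · exact ⟨0, 1, by decide, mem 0 u1, mem 1 u2⟩
      · exact ⟨0, 2, by decide, mem 0 u1, mem 2 u2⟩
      · exact ⟨0, 3, by decide, mem 0 u1, mem 3 u2⟩
      · exact ⟨1, 2, by decide, mem 1 u1, mem 2 u2⟩
      · exact ⟨1, 3, by decide, mem 1 u1, mem 3 u2⟩
      · exact ⟨2, 3, by decide, mem 2 u1, mem 3 u2⟩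
    -- counting
    have hIfin : I.Finite := Set.toFinite _
    have hCfin : ∀ i, (Cs i).Finite := fun i => Set.toFinite _
    let FI : Finset (Sym2 (Sym2 V)) := hIfin.toFinset
    let FC : Fin 4 → Finset (Sym2 (Sym2 V)) := fun i => (hCfin i).toFinset
    have hsubC : ∀ i, FC i ⊆ FI := by
      intro i p hp
      rw [Set.Finite.mem_toFinset] at hp ⊢
      obtain ⟨e, f, rfl, he, hf, hcc⟩ := hp
      exact ⟨e, f, rfl, he, hf, hcc.1⟩
    have key2 : ∀ p ∈ FI, 2 ≤ (Finset.univ.filter fun i => p ∈ FC i).card := by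
      intro p hp
      rw [Set.Finite.mem_toFinset] at hp
      obtain ⟨i, j, hij, hi, hj⟩ := core p hp
      have hss : ({i, j} : Finset (Fin 4)) ⊆ Finset.univ.filter fun t => p ∈ FC t := by
        intro t ht
        rw [Finset.mem_insert, Finset.mem_singleton] at ht
        rcases ht with rfl | rfl
        · refine Finset.mem_filter.mpr ⟨Finset.mem_univ _, ?_⟩
          exact (Set.Finite.mem_toFinset _).mpr hi
        · refine Finset.mem_filter.mpr ⟨Finset.mem_univ _, ?_⟩
          exact (Set.Finite.mem_toFinset _).mpr hj
      calc 2 = ({i, j} : Finset (Fin 4)).card := (Finset.card_pair hij).symm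
        _ ≤ _ := Finset.card_le_card hss
    have hsum : 2 * FI.card ≤ ∑ i : Fin 4, (FC i).card := by
      calc 2 * FI.card = ∑ _p ∈ FI, 2 := by
            rw [Finset.sum_const, smul_eq_mul, mul_comm]
        _ ≤ ∑ p ∈ FI, (Finset.univ.filter fun i => p ∈ FC i).card :=
            Finset.sum_le_sum key2
        _ = ∑ p ∈ FI, ∑ i : Fin 4, (if p ∈ FC i then 1 else 0) := by
            refine Finset.sum_congr rfl fun p _ => ?_
            exact Finset.card_filter _ _
        _ = ∑ i : Fin 4, ∑ p ∈ FI, (if p ∈ FC i then 1 else 0) := Finset.sum_comm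
        _ = ∑ i : Fin 4, (FI.filter fun p => p ∈ FC i).card := by
            refine Finset.sum_congr rfl fun i _ => ?_
            exact (Finset.card_filter _ _).symm
        _ ≤ ∑ i : Fin 4, (FC i).card := by
            refine Finset.sum_le_sum fun i _ => ?_
            refine Finset.card_le_card fun p hp => ?_
            exact (Finset.mem_filter.mp hp).2
    have hex : ∃ i : Fin 4, FI.card ≤ 2 * (FC i).card := by
      by_contra hcon
      push_neg at hcon
      have h0 := hcon 0
      have h1 := hcon 1
      have h2 := hcon 2
      have h3 := hcon 3
      rw [Fin.sum_univ_four] at hsum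
      omega
    obtain ⟨i, hi⟩ := hex
    refine ⟨σf i, hσinj i, ?_⟩
    have e1 : indepPairs G = FI.card := by
      unfold indepPairs
      exact Set.ncard_eq_toFinset_card _ hIfin
    have e2 : convexCr G (σf i) = (FC i).card := by
      unfold convexCr
      exact Set.ncard_eq_toFinset_card _ (hCfin i)
    rw [e1, e2]
    exact hi
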